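/- Let q be a prime power and let C₁ and C₂ be two symplectic LCD [2n,2k]_q codes. Then there exists a symplectic matrix Q ∈ Sp¹_{2n}(q) such that C₂ = C₁Q. Conversely, for any symplectic LCD [2n,2k]_q code C and any symplectic matrix Q ∈ Sp¹_{2n}(q), the code CQ is also a symplectic LCD [2n,2k]_q code. -/

import Mathlib

open scoped BigOperators
open Matrix

noncomputable section

/-- The symplectic inner product `⟨x,y⟩_s = ∑_{i=1}^n (x_i y_{n+i} - x_{n+i} y_i)` on `K^{2n}`. -/
def sympInner {K : Type*} [Field K] (n : ℕ) (x y : Fin (2 * n) → K) : K :=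
  ∑ i : Fin n,
    (x ⟨i.1, by have := i.2; omega⟩ * y ⟨n + i.1, by have := i.2; omega⟩ -
      x ⟨n + i.1, by have := i.2; omega⟩ * y ⟨i.1, by have := i.2; omega⟩)

/-- The symplectic dual `C^{⊥s}` of a code `C ⊆ K^{2n}`. -/
def sympDual {K : Type*} [Field K] (n : ℕ) (C : Submodule K (Fin (2 * n) → K)) :
    Submodule K (Fin (2 * n) → K) where
  carrier := {y | ∀ x ∈ C, sympInner n x y = 0}
  zero_mem' := by
    intro x hx
    simp [sympInner]
  add_mem' := by
    intro y z hy hz x hx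
    have h1 := hy x hx
    have h2 := hz x hx
    simp only [sympInner, Pi.add_apply] at h1 h2 ⊢
    calc (∑ i : Fin n, _) = (∑ i : Fin n,
          (x ⟨i.1, by have := i.2; omega⟩ * y ⟨n + i.1, by have := i.2; omega⟩ -
            x ⟨n + i.1, by have := i.2; omega⟩ * y ⟨i.1, by have := i.2; omega⟩)) +
        ∑ i : Fin n,
          (x ⟨i.1, by have := i.2; omega⟩ * z ⟨n + i.1, by have := i.2; omega⟩ -
            x ⟨n + i.1, by have := i.2; omega⟩ * z ⟨i.1, by have := i.2; omega⟩) := by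
          rw [← Finset.sum_add_distrib]
          exact Finset.sum_congr rfl fun i _ => by ring
      _ = 0 := by rw [h1, h2, add_zero]
  smul_mem' := by
    intro c y hy x hx
    have h := hy x hx
    simp only [sympInner, Pi.smul_apply, smul_eq_mul] at h ⊢
    calc (∑ i : Fin n, _) = c * ∑ i : Fin n,
          (x ⟨i.1, by have := i.2; omega⟩ * y ⟨n + i.1, by have := i.2; omega⟩ -
            x ⟨n + i.1, by have := i.2; omega⟩ * y ⟨i.1, by have := i.2; omega⟩) := by
          rw [Finset.mul_sum]
          exact Finset.sum_congr rfl fun i _ => by ring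
      _ = 0 := by rw [h, mul_zero]

/-- The matrix `Ω_n = [[O, I_n], [-I_n, O]]` defining the symplectic inner product. -/
def sympOmega (n : ℕ) (K : Type*) [Field K] : Matrix (Fin (2 * n)) (Fin (2 * n)) K :=
  Matrix.of fun i j => if j.1 = i.1 + n then 1 else if i.1 = j.1 + n then -1 else 0

/-- The block diagonal matrix `diag(J₂, …, J₂)` (with `J₂ = [[0,1],[-1,0]]`) of size `N`. -/
def jayBlocks (N : ℕ) (K : Type*) [Field K] : Matrix (Fin N) (Fin N) K :=
  Matrix.of fun i j =>
    if i.1 % 2 = 0 ∧ j.1 = i.1 + 1 then 1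
    else if j.1 % 2 = 0 ∧ i.1 = j.1 + 1 then -1 else 0

namespace SympAux
variable {K : Type*} [Field K] {n : ℕ}

def lo (n : ℕ) (i : Fin n) : Fin (2 * n) := ⟨i.1, by have := i.2; omega⟩
def hi (n : ℕ) (i : Fin n) : Fin (2 * n) := ⟨n + i.1, by have := i.2; omega⟩

lemma sum_split (g : Fin (2 * n) → K) :
    ∑ i, g i = ∑ i : Fin n, g (lo n i) + ∑ i : Fin n, g (hi n i) := by
  rw [← Equiv.sum_comp (finSumFinEquiv.trans (finCongr (two_mul n).symm)) g,
    Fintype.sum_sum_type]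
  congr 1

lemma mulVec_omega_lo (y : Fin (2 * n) → K) (i : Fin n) :
    (sympOmega n K *ᵥ y) (lo n i) = y (hi n i) := by
  rw [Matrix.mulVec]
  rw [show (sympOmega n K (lo n i)) ⬝ᵥ y = ∑ j, sympOmega n K (lo n i) j * y j from rfl]
  rw [Finset.sum_eq_single (hi n i)]
  · simp [sympOmega, lo, hi, add_comm]
  · intro j _ hj
    have h1 : ¬ (j.1 = i.1 + n) := by
      intro h; apply hj; apply Fin.ext; simp [hi, h, add_comm]
    have h2 : ¬ (i.1 = j.1 + n) := by have := i.2; omega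
    simp [sympOmega, lo, h1, h2]
  · intro h; exact absurd (Finset.mem_univ _) h

lemma mulVec_omega_hi (y : Fin (2 * n) → K) (i : Fin n) :
    (sympOmega n K *ᵥ y) (hi n i) = -y (lo n i) := by
  rw [Matrix.mulVec]
  rw [show (sympOmega n K (hi n i)) ⬝ᵥ y = ∑ j, sympOmega n K (hi n i) j * y j from rfl]
  rw [Finset.sum_eq_single (lo n i)]
  · have h : sympOmega n K (hi n i) (lo n i) = -1 := by
      show (if (lo n i).1 = (hi n i).1 + n then (1:K) else if (hi n i).1 = (lo n i).1 + n then -1 else 0) = -1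
      rw [if_neg (by simp [lo, hi]; omega), if_pos (by simp [lo, hi]; omega)]
    rw [h]; ring
  · intro j _ hj
    have h1 : ¬ (j.1 = (hi n i).1 + n) := by
      simp only [hi]; have := j.2; omega
    have h2 : ¬ ((hi n i).1 = j.1 + n) := by
      simp only [hi]; intro h; apply hj; apply Fin.ext; simp [lo]; omega
    simp [sympOmega, h1, h2]
  · intro h; exact absurd (Finset.mem_univ _) h

lemma sympInner_eq (x y : Fin (2 * n) → K) :
    sympInner n x y = x ⬝ᵥ (sympOmega n K *ᵥ y) := by
  rw [show x ⬝ᵥ (sympOmega n K *ᵥ y) = ∑ i, x i * (sympOmega n K *ᵥ y) i from rfl,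
    sum_split (fun i => x i * (sympOmega n K *ᵥ y) i)]
  simp only [mulVec_omega_lo, mulVec_omega_hi, sympInner]
  rw [Finset.sum_sub_distrib, sub_eq_add_neg]
  congr 1
  rw [← Finset.sum_neg_distrib]
  exact Finset.sum_congr rfl fun i _ => (mul_neg _ _).symm


variable {K : Type*} [Field K] {n : ℕ}

open LinearMap (BilinForm)

/-- The symplectic form as a bilinear form. -/
def Bf (n : ℕ) (K : Type*) [Field K] : LinearMap.BilinForm K (Fin (2 * n) → K) :=
  LinearMap.mk₂ K (fun x y => x ⬝ᵥ (sympOmega n K *ᵥ y))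
    (fun x x' y => by simp [add_dotProduct])
    (fun c x y => by simp [smul_dotProduct])
    (fun x y y' => by simp [Matrix.mulVec_add, dotProduct_add])
    (fun c x y => by simp [Matrix.mulVec_smul, dotProduct_smul])

lemma Bf_apply (x y : Fin (2 * n) → K) : Bf n K x y = sympInner n x y :=
  (sympInner_eq x y).symm

lemma Bf_isAlt : (Bf n K).IsAlt := by
  intro x
  rw [Bf_apply]
  unfold sympInner
  exact Finset.sum_eq_zero fun i _ => by ring

lemma Bf_isRefl : (Bf n K).IsRefl := Bf_isAlt.isRefl

lemma omega_mul_omega : sympOmega n K * sympOmega n K = -1 := by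
  ext i j
  have hmv : (sympOmega n K * sympOmega n K) i j
      = (sympOmega n K *ᵥ (fun l => sympOmega n K l j)) i := by
    simp [Matrix.mul_apply, Matrix.mulVec, dotProduct]
  have hrhs : (-1 : Matrix (Fin (2*n)) (Fin (2*n)) K) i j
      = if i = j then -1 else 0 := by
    rcases eq_or_ne i j with h | h <;> simp [Matrix.neg_apply, Matrix.one_apply, h]
  rw [hmv, hrhs]
  rcases lt_or_ge i.1 n with h | h
  · have hi' : i = lo n ⟨i.1, h⟩ := rfl
    conv_lhs => rw [hi', mulVec_omega_lo]
    show (if j.1 = (hi n ⟨i.1, h⟩).1 + n then (1:K)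
        else if (hi n ⟨i.1, h⟩).1 = j.1 + n then -1 else 0) = _
    rw [if_neg (by simp only [hi]; have := j.2; omega)]
    rcases eq_or_ne i j with hij | hij
    · subst hij
      rw [if_pos (by simp only [hi]; omega), if_pos rfl]
    · rw [if_neg (fun hc => hij (Fin.ext (by simp only [hi] at hc; omega))), if_neg hij]
  · have h2 : i.1 - n < n := by have := i.2; omega
    have hi' : i = hi n ⟨i.1 - n, h2⟩ := by apply Fin.ext; simp only [hi]; omega
    conv_lhs => rw [hi', mulVec_omega_hi]
    show -(if j.1 = (lo n ⟨i.1 - n, h2⟩).1 + n then (1:K)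
        else if (lo n ⟨i.1 - n, h2⟩).1 = j.1 + n then -1 else 0) = _
    rcases eq_or_ne i j with hij | hij
    · subst hij
      rw [if_pos (by simp only [lo]; omega), if_pos rfl]
    · rw [if_neg (fun hc => hij (Fin.ext (by simp only [lo] at hc; omega))),
        if_neg (fun hc => hij (Fin.ext (by simp only [lo] at hc; have := j.2; omega))),
        if_neg hij]
      ring

lemma det_omega_mul_self : Matrix.det (sympOmega n K) * Matrix.det (sympOmega n K) = 1 := by
  have := congrArg Matrix.det (omega_mul_omega (n := n) (K := K))
  rw [Matrix.det_mul, Matrix.det_neg, Matrix.det_one, mul_one] at this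
  rw [this, Fintype.card_fin, pow_mul]
  norm_num

lemma det_omega_ne_zero : Matrix.det (sympOmega n K) ≠ 0 :=
  left_ne_zero_of_mul_eq_one det_omega_mul_self

lemma Bf_nondegenerate : (Bf n K).Nondegenerate := by
  refine (LinearMap.IsRefl.nondegenerate_iff_separatingLeft (B := Bf n K) Bf_isRefl).mpr ?_
  intro x hx
  have hv : ∀ y, (x ᵥ* sympOmega n K) ⬝ᵥ y = 0 := by
    intro y
    rw [← Matrix.dotProduct_mulVec]
    exact hx y
  have h0 : x ᵥ* sympOmega n K = 0 := by
    ext j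
    have := hv (Pi.single j 1)
    rwa [dotProduct_single, mul_one] at this
  have h1 : x ᵥ* (sympOmega n K * sympOmega n K) = 0 := by
    rw [← Matrix.vecMul_vecMul, h0, Matrix.zero_vecMul]
  rw [omega_mul_omega] at h1
  rw [show (-1 : Matrix (Fin (2*n)) (Fin (2*n)) K) = -(1 : Matrix (Fin (2*n)) (Fin (2*n)) K) from rfl,
    Matrix.vecMul_neg, Matrix.vecMul_one, neg_eq_zero] at h1
  exact h1

lemma sympDual_eq_orthogonal (C : Submodule K (Fin (2 * n) → K)) :
    sympDual n C = (Bf n K).orthogonal C := by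
  ext y
  show (∀ x ∈ C, sympInner n x y = 0) ↔ _
  rw [LinearMap.BilinForm.mem_orthogonal_iff]
  constructor
  · intro h x hx; rw [Bf_apply]; exact h x hx
  · intro h x hx; rw [← Bf_apply]; exact h x hx


variable {K : Type*} [Field K] {n : ℕ}

set_option maxHeartbeats 1000000 in
theorem exists_sympl_basis (r : ℕ) :
    ∀ (W : Submodule K (Fin (2 * n) → K)),
      ((Bf n K).restrict W).Nondegenerate → Module.finrank K W = r →
      ∃ (m : ℕ) (a b : Fin m → (Fin (2 * n) → K)),
        (∀ i, a i ∈ W) ∧ (∀ i, b i ∈ W) ∧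
        (∀ i j, Bf n K (a i) (a j) = 0) ∧ (∀ i j, Bf n K (b i) (b j) = 0) ∧
        (∀ i j, Bf n K (a i) (b j) = if i = j then 1 else 0) ∧
        Submodule.span K (Set.range a ∪ Set.range b) = W ∧
        Module.finrank K W = 2 * m := by
  induction r using Nat.strong_induction_on with
  | _ r IH =>
  intro W hW hr
  rcases eq_or_ne W ⊥ with hbot | hbot
  · refine ⟨0, Fin.elim0, Fin.elim0, fun i => i.elim0, fun i => i.elim0,
      fun i => i.elim0, fun i => i.elim0, fun i => i.elim0, ?_, ?_⟩
    · simp [Set.range_eq_empty, hbot]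
    · rw [hbot, finrank_bot]
  · obtain ⟨x, hxW, hx0⟩ := Submodule.ne_bot_iff W |>.mp hbot
    have hex : ¬ (∀ w : W, (Bf n K).restrict W ⟨x, hxW⟩ w = 0) := by
      intro hall
      exact hx0 (congrArg Subtype.val (hW.1 ⟨x, hxW⟩ hall))
    push_neg at hex
    obtain ⟨w, hw⟩ := hex
    rw [LinearMap.BilinForm.restrict_apply] at hw
    set c : K := Bf n K x w.1 with hc
    have hwc : c ≠ 0 := hw
    set b0 : Fin (2 * n) → K := c⁻¹ • w.1 with hb0
    have hb0W : b0 ∈ W := Submodule.smul_mem W _ w.2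
    have hxb0 : Bf n K x b0 = 1 := by
      rw [hb0, _root_.map_smul, smul_eq_mul, ← hc, inv_mul_cancel₀ hwc]
    have hxx : Bf n K x x = 0 := Bf_isAlt x
    have hb0b0 : Bf n K b0 b0 = 0 := Bf_isAlt b0
    have hb0x : Bf n K b0 x = -1 := by
      have h0 := Bf_isAlt (x + b0)
      simp only [map_add, LinearMap.add_apply, hxx, hxb0, hb0b0] at h0
      linear_combination h0
    set H : Submodule K (Fin (2 * n) → K) := Submodule.span K {x, b0} with hH
    set W' : Submodule K (Fin (2 * n) → K) := W ⊓ (Bf n K).orthogonal H with hW'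
    have hxH : x ∈ H := Submodule.subset_span (Set.mem_insert _ _)
    have hb0H : b0 ∈ H := Submodule.subset_span (Set.mem_insert_of_mem _ rfl)
    -- any element of W decomposes
    have horthmem : ∀ z : Fin (2 * n) → K, Bf n K x z = 0 → Bf n K b0 z = 0 →
        z ∈ (Bf n K).orthogonal H := by
      intro z h1 h2
      intro u huH
      have hle : H ≤ LinearMap.ker ((Bf n K).flip z) := by
        rw [hH, Submodule.span_le]
        rintro v hv
        rcases hv with rfl | hv
        · exact LinearMap.mem_ker.mpr h1
        · rcases hv with rfl
          exact LinearMap.mem_ker.mpr h2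
      exact hle huH
    have hdecomp : ∀ z ∈ W, z - (-(Bf n K b0 z)) • x - (Bf n K x z) • b0 ∈ W' := by
      intro z hzW
      refine Submodule.mem_inf.mpr ⟨?_, ?_⟩
      · exact Submodule.sub_mem W (Submodule.sub_mem W hzW (Submodule.smul_mem W _ hxW))
          (Submodule.smul_mem W _ hb0W)
      · apply horthmem
        · simp only [map_sub, _root_.map_smul, smul_eq_mul, hxx, hxb0]
          ring
        · simp only [map_sub, _root_.map_smul, smul_eq_mul, hb0b0, hb0x]
          ring
    have hsup : H ⊔ W' = W := by
      apply le_antisymm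
      · refine sup_le ?_ inf_le_left
        rw [hH, Submodule.span_le]
        rintro v hv
        rcases hv with rfl | hv
        · exact hxW
        · rcases hv with rfl; exact hb0W
      · intro z hzW
        have h1 := hdecomp z hzW
        have : z = ((-(Bf n K b0 z)) • x + (Bf n K x z) • b0) +
            (z - (-(Bf n K b0 z)) • x - (Bf n K x z) • b0) := by abel
        rw [this]
        exact Submodule.add_mem _
          (Submodule.mem_sup_left (Submodule.add_mem H (Submodule.smul_mem H _ hxH)
            (Submodule.smul_mem H _ hb0H)))
          (Submodule.mem_sup_right h1)
    have hdisj : H ⊓ W' = ⊥ := by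
      rw [eq_bot_iff]
      rintro z hz
      obtain ⟨hzH, _, hzO⟩ := Submodule.mem_inf.mp hz
      obtain ⟨s, t, hst⟩ := Submodule.mem_span_pair.mp hzH
      have h1 : Bf n K x z = 0 := hzO x hxH
      have h2 : Bf n K b0 z = 0 := hzO b0 hb0H
      rw [← hst] at h1 h2
      simp only [map_add, _root_.map_smul, smul_eq_mul, hxx, hxb0, hb0b0, hb0x] at h1 h2
      have hs : s = 0 := by linear_combination -h2
      have ht : t = 0 := by linear_combination h1
      rw [← hst, hs, ht]
      simp
    have hli : LinearIndependent K ![x, b0] := by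
      rw [LinearIndependent.pair_iff]
      intro s t hst
      have h1 := congrArg (fun z => Bf n K x z) hst
      have h2 := congrArg (fun z => Bf n K b0 z) hst
      simp only [map_add, _root_.map_smul, smul_eq_mul, hxx, hxb0, hb0b0, hb0x, map_zero] at h1 h2
      exact ⟨by linear_combination -h2, by linear_combination h1⟩
    have hrangepair : Set.range ![x, b0] = {x, b0} := by
      simp only [Matrix.range_cons, Matrix.range_empty, Set.union_empty]
      rfl
    have hfinH : Module.finrank K H = 2 := by
      rw [hH, ← hrangepair, finrank_span_eq_card hli, Fintype.card_fin]
    have hfinsum : Module.finrank K W = 2 + Module.finrank K W' := by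
      have h := Submodule.finrank_sup_add_finrank_inf_eq H W'
      rw [hsup, hdisj, finrank_bot, add_zero, hfinH] at h
      exact h
    -- nondegeneracy of restriction to W'
    have hW'nd : ((Bf n K).restrict W').Nondegenerate := by
      refine (LinearMap.IsRefl.nondegenerate_iff_separatingLeft (B := (Bf n K).restrict W')
        (fun x y h => Bf_isRefl (x : Fin (2 * n) → K) y h)).mpr ?_
      rintro ⟨v, hvW'⟩ hval
      obtain ⟨hvW, hvO⟩ := Submodule.mem_inf.mp hvW'
      have hall : ∀ z ∈ W, Bf n K v z = 0 := by
        intro z hzW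
        rw [← hsup] at hzW
        obtain ⟨u, huH, u', hu'W', rfl⟩ := Submodule.mem_sup.mp hzW
        have h1 : Bf n K v u = 0 := Bf_isRefl u v (hvO u huH)
        have h2 : Bf n K v u' = 0 := by
          have := hval ⟨u', hu'W'⟩
          rwa [LinearMap.BilinForm.restrict_apply] at this
        rw [map_add, h1, h2, add_zero]
      have : (⟨v, hvW⟩ : W) = 0 := by
        apply hW.1
        intro z
        rw [LinearMap.BilinForm.restrict_apply]
        exact hall z.1 z.2
      have hv0 : v = 0 := congrArg Subtype.val this
      exact Subtype.ext hv0
    -- recurse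
    have hlt : Module.finrank K W' < r := by omega
    obtain ⟨m, a', b', ha'W, hb'W, haa, hbb, hab, hspan', hfin'⟩ :=
      IH (Module.finrank K W') hlt W' hW'nd rfl
    have hW'le : W' ≤ W := inf_le_left
    have horth1 : ∀ z ∈ W', Bf n K x z = 0 := fun z hz => (Submodule.mem_inf.mp hz).2 x hxH
    have horth2 : ∀ z ∈ W', Bf n K b0 z = 0 := fun z hz => (Submodule.mem_inf.mp hz).2 b0 hb0H
    have horth1' : ∀ z ∈ W', Bf n K z x = 0 := fun z hz => Bf_isRefl x z (horth1 z hz)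
    have horth2' : ∀ z ∈ W', Bf n K z b0 = 0 := fun z hz => Bf_isRefl b0 z (horth2 z hz)
    refine ⟨m + 1, Fin.cons x a', Fin.cons b0 b', ?_, ?_, ?_, ?_, ?_, ?_, ?_⟩
    · intro i
      induction i using Fin.cases with
      | zero => simpa using hxW
      | succ i => simpa using hW'le (ha'W i)
    · intro i
      induction i using Fin.cases with
      | zero => simpa using hb0W
      | succ i => simpa using hW'le (hb'W i)
    · intro i j
      induction i using Fin.cases with
      | zero =>
        induction j using Fin.cases with
        | zero => simpa using hxx
        | succ j => simpa using horth1 _ (ha'W j)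
      | succ i =>
        induction j using Fin.cases with
        | zero => simpa using horth1' _ (ha'W i)
        | succ j => simpa using haa i j
    · intro i j
      induction i using Fin.cases with
      | zero =>
        induction j using Fin.cases with
        | zero => simpa using hb0b0
        | succ j => simpa using horth2 _ (hb'W j)
      | succ i =>
        induction j using Fin.cases with
        | zero => simpa using horth2' _ (hb'W i)
        | succ j => simpa using hbb i j
    · intro i j
      induction i using Fin.cases with
      | zero =>
        induction j using Fin.cases with
        | zero => simpa using hxb0
        | succ j =>
          have h0 : Bf n K x (b' j) = 0 := horth1 _ (hb'W j)
          have hne : (0 : Fin (m+1)) ≠ Fin.succ j := (Fin.succ_ne_zero j).symm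
          simpa [hne] using h0
      | succ i =>
        induction j using Fin.cases with
        | zero =>
          have h0 : Bf n K (a' i) b0 = 0 := horth2' _ (ha'W i)
          have hne : Fin.succ i ≠ (0 : Fin (m+1)) := Fin.succ_ne_zero i
          simpa [hne] using h0
        | succ j =>
          have := hab i j
          simp only [Fin.cons_succ]
          rw [this]
          by_cases hij : i = j
          · simp [hij]
          · rw [if_neg hij, if_neg (fun hc => hij (Fin.succ_injective _ hc))]
    · rw [Fin.range_cons, Fin.range_cons]
      have hset : insert x (Set.range a') ∪ insert b0 (Set.range b')
          = ({x, b0} : Set (Fin (2*n) → K)) ∪ (Set.range a' ∪ Set.range b') := by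
        ext z
        simp only [Set.mem_insert_iff, Set.mem_union, Set.mem_setOf_eq]
        tauto
      rw [hset, Submodule.span_union, hspan', ← hH, hsup]
    · omega

variable {K : Type*} [Field K] {n : ℕ}

lemma Bf_skew (x y : Fin (2 * n) → K) : Bf n K y x = -(Bf n K x y) := by
  have h0 := Bf_isAlt (x + y)
  simp only [map_add, LinearMap.add_apply, Bf_isAlt x, Bf_isAlt y] at h0
  linear_combination h0

def fbuild (n k : ℕ) {K : Type*} [Field K] (a b : Fin k → (Fin (2 * n) → K))
    (c d : Fin (n - k) → (Fin (2 * n) → K)) : Fin (2 * n) → (Fin (2 * n) → K) :=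
  fun i =>
    if h : i.1 < n then
      (if h2 : i.1 < k then a ⟨i.1, h2⟩ else c ⟨i.1 - k, by omega⟩)
    else
      (if h2 : i.1 - n < k then b ⟨i.1 - n, h2⟩ else d ⟨i.1 - n - k, by have := i.2; omega⟩)

set_option maxHeartbeats 1000000 in
lemma gram (k : ℕ) (a b : Fin k → (Fin (2 * n) → K)) (c d : Fin (n - k) → (Fin (2 * n) → K))
    (haa : ∀ i j, Bf n K (a i) (a j) = 0) (hbb : ∀ i j, Bf n K (b i) (b j) = 0)
    (hab : ∀ i j, Bf n K (a i) (b j) = if i = j then 1 else 0)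
    (hba : ∀ i j, Bf n K (b i) (a j) = if i = j then -1 else 0)
    (hcc : ∀ i j, Bf n K (c i) (c j) = 0) (hdd : ∀ i j, Bf n K (d i) (d j) = 0)
    (hcd : ∀ i j, Bf n K (c i) (d j) = if i = j then 1 else 0)
    (hdc : ∀ i j, Bf n K (d i) (c j) = if i = j then -1 else 0)
    (hac : ∀ i j, Bf n K (a i) (c j) = 0) (hca : ∀ i j, Bf n K (c i) (a j) = 0)
    (had : ∀ i j, Bf n K (a i) (d j) = 0) (hda : ∀ i j, Bf n K (d i) (a j) = 0)
    (hbc : ∀ i j, Bf n K (b i) (c j) = 0) (hcb : ∀ i j, Bf n K (c i) (b j) = 0)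
    (hbd : ∀ i j, Bf n K (b i) (d j) = 0) (hdb : ∀ i j, Bf n K (d i) (b j) = 0) :
    ∀ i j, Bf n K (fbuild n k a b c d i) (fbuild n k a b c d j) = sympOmega n K i j := by
  intro i j
  have hib := i.isLt
  have hjb := j.isLt
  unfold fbuild
  split_ifs <;>
    (first
      | rw [haa] | rw [hab] | rw [hac] | rw [had]
      | rw [hba] | rw [hbb] | rw [hbc] | rw [hbd]
      | rw [hca] | rw [hcb] | rw [hcc] | rw [hcd]
      | rw [hda] | rw [hdb] | rw [hdc] | rw [hdd]) <;>
    simp only [sympOmega, Matrix.of_apply, Fin.mk.injEq] <;>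
    (split_ifs <;> first | rfl | omega | (exfalso; omega))

def stdCode (n k : ℕ) (K : Type*) [Field K] : Submodule K (Fin (2 * n) → K) :=
  Submodule.span K ((fun i => Pi.single i (1 : K)) ''
    {i : Fin (2 * n) | i.1 < k ∨ (n ≤ i.1 ∧ i.1 < n + k)})

set_option maxHeartbeats 1000000 in
theorem exists_symp_matrix_to_std (k : ℕ) (C : Submodule K (Fin (2 * n) → K))
    (hC : Module.finrank K C = 2 * k) (hL : C ⊓ sympDual n C = ⊥) :
    ∃ P : Matrix (Fin (2 * n)) (Fin (2 * n)) K,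
      P * sympOmega n K * Pᵀ = sympOmega n K ∧ IsUnit P ∧
      (stdCode n k K).map (Matrix.vecMulLinear P) = C := by
  have hfinV : Module.finrank K (Fin (2 * n) → K) = 2 * n := by
    rw [Module.finrank_pi, Fintype.card_fin]
  have hkn : k ≤ n := by
    have := Submodule.finrank_le C
    rw [hC, hfinV] at this
    omega
  have hscd := sympDual_eq_orthogonal (n := n) (K := K) C
  have hdisj : Disjoint C ((Bf n K).orthogonal C) := disjoint_iff.mpr (hscd ▸ hL)
  have hCrest : ((Bf n K).restrict C).Nondegenerate :=
    (Bf n K).nondegenerate_restrict_of_disjoint_orthogonal Bf_isRefl hdisj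
  have hcompl : IsCompl C ((Bf n K).orthogonal C) :=
    LinearMap.BilinForm.isCompl_orthogonal_of_restrict_nondegenerate Bf_isRefl hCrest
  set D : Submodule K (Fin (2 * n) → K) := (Bf n K).orthogonal C with hD
  have hDrest : ((Bf n K).restrict D).Nondegenerate := by
    rw [LinearMap.BilinForm.restrict_nondegenerate_iff_isCompl_orthogonal Bf_isRefl]
    rw [hD, LinearMap.BilinForm.orthogonal_orthogonal Bf_nondegenerate Bf_isRefl]
    exact hcompl.symm
  have hfinD : Module.finrank K D = 2 * n - 2 * k := by
    rw [hD, LinearMap.BilinForm.finrank_orthogonal Bf_nondegenerate, hfinV, hC]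
  obtain ⟨k', a, b, haC, hbC, haa, hbb, hab, hspanC, hfinC2⟩ :=
    exists_sympl_basis (Module.finrank K C) C hCrest rfl
  have hk' : k' = k := by omega
  subst hk'
  obtain ⟨m, c, d, hcD, hdD, hcc, hdd, hcd, -, hfinD2⟩ :=
    exists_sympl_basis (Module.finrank K D) D hDrest rfl
  have hm : m = n - k' := by omega
  subst hm
  -- derived pairings
  have hba : ∀ i j, Bf n K (b i) (a j) = if i = j then -1 else 0 := by
    intro i j
    rw [Bf_skew, hab j i]
    rcases eq_or_ne i j with h | h
    · simp [h]
    · simp [h, Ne.symm h]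
  have hdc : ∀ i j, Bf n K (d i) (c j) = if i = j then -1 else 0 := by
    intro i j
    rw [Bf_skew, hcd j i]
    rcases eq_or_ne i j with h | h
    · simp [h]
    · simp [h, Ne.symm h]
  have hCDz : ∀ u ∈ C, ∀ v ∈ D, Bf n K u v = 0 := fun u hu v hv => hv u hu
  have hDCz : ∀ v ∈ D, ∀ u ∈ C, Bf n K v u = 0 := fun v hv u hu => by
    rw [Bf_skew, hCDz u hu v hv, neg_zero]
  obtain ⟨P, hPsymp, hPunit, hPmap⟩ : ∃ P : Matrix (Fin (2 * n)) (Fin (2 * n)) K,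
      P * sympOmega n K * Pᵀ = sympOmega n K ∧ IsUnit P ∧
      (stdCode n k' K).map (Matrix.vecMulLinear P) = C := by
    set f : Fin (2 * n) → (Fin (2 * n) → K) := fbuild n k' a b c d with hf
    have hGram := gram k' a b c d haa hbb hab hba hcc hdd hcd hdc
      (fun i j => hCDz _ (haC i) _ (hcD j)) (fun i j => hDCz _ (hcD i) _ (haC j))
      (fun i j => hCDz _ (haC i) _ (hdD j)) (fun i j => hDCz _ (hdD i) _ (haC j))
      (fun i j => hCDz _ (hbC i) _ (hcD j)) (fun i j => hDCz _ (hcD i) _ (hbC j))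
      (fun i j => hCDz _ (hbC i) _ (hdD j)) (fun i j => hDCz _ (hdD i) _ (hbC j))
    set P : Matrix (Fin (2 * n)) (Fin (2 * n)) K := Matrix.of (fun i j => f i j) with hP
    have hPsymp : P * sympOmega n K * Pᵀ = sympOmega n K := by
      ext i j
      have hmul : (P * sympOmega n K * Pᵀ) i j = f i ⬝ᵥ (sympOmega n K *ᵥ f j) := by
        rw [Matrix.mul_assoc]
        simp only [Matrix.mul_apply, Matrix.mulVec, dotProduct, Matrix.transpose_apply, hP,
          Matrix.of_apply]
      rw [hmul]
      exact hGram i j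
    have hPunit : IsUnit P := by
      have hdet := congrArg Matrix.det hPsymp
      rw [Matrix.det_mul, Matrix.det_mul, Matrix.det_transpose] at hdet
      have h2 : Matrix.det (sympOmega n K) * (Matrix.det P * Matrix.det P - 1) = 0 := by
        linear_combination hdet
      rcases mul_eq_zero.mp h2 with h3 | h3
      · exact absurd h3 det_omega_ne_zero
      · rw [Matrix.isUnit_iff_isUnit_det]
        exact IsUnit.of_mul_eq_one _ (by linear_combination h3)
    refine ⟨P, hPsymp, hPunit, ?_⟩
    rw [stdCode, Submodule.map_span, ← Set.image_comp]
    have hcomp : (⇑(Matrix.vecMulLinear P) ∘ fun i => Pi.single i (1 : K)) = f := by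
      funext i
      rw [Function.comp_apply, Matrix.vecMulLinear_apply, Matrix.single_one_vecMul]
      rfl
    rw [hcomp]
    have himg : f '' {i : Fin (2 * n) | i.1 < k' ∨ (n ≤ i.1 ∧ i.1 < n + k')}
        = Set.range a ∪ Set.range b := by
      ext z
      constructor
      · rintro ⟨i, hi, rfl⟩
        rcases hi with h | ⟨h1, h2⟩
        · left
          refine ⟨⟨i.1, h⟩, ?_⟩
          rw [hf]
          unfold fbuild
          rw [dif_pos (by omega), dif_pos h]
        · right
          refine ⟨⟨i.1 - n, by omega⟩, ?_⟩
          rw [hf]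
          unfold fbuild
          rw [dif_neg (by omega), dif_pos (by omega)]
      · rintro (⟨i, rfl⟩ | ⟨i, rfl⟩)
        · have hi2 := i.2
          refine ⟨⟨i.1, by omega⟩, Or.inl (by simp only [Fin.val_mk]; omega), ?_⟩
          rw [hf]
          unfold fbuild
          rw [dif_pos (by simp only [Fin.val_mk]; omega),
            dif_pos (by simp only [Fin.val_mk]; omega)]
        · have hi2 := i.2
          refine ⟨⟨n + i.1, by omega⟩,
            Or.inr ⟨by simp only [Fin.val_mk]; omega, by simp only [Fin.val_mk]; omega⟩, ?_⟩
          rw [hf]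
          unfold fbuild
          rw [dif_neg (by simp only [Fin.val_mk]; omega),
            dif_pos (by simp only [Fin.val_mk]; omega)]
          exact congrArg b (Fin.ext (by simp only [Fin.val_mk]; omega))
    rw [himg, hspanC]
  exact ⟨P, hPsymp, hPunit, hPmap⟩


variable {K : Type*} [Field K] {n : ℕ}

lemma mem_sympDual {C : Submodule K (Fin (2 * n) → K)} {y : Fin (2 * n) → K} :
    y ∈ sympDual n C ↔ ∀ x ∈ C, sympInner n x y = 0 := Iff.rfl

lemma vml_mul (A B : Matrix (Fin (2 * n)) (Fin (2 * n)) K) :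
    Matrix.vecMulLinear (A * B) = (Matrix.vecMulLinear B).comp (Matrix.vecMulLinear A) := by
  apply LinearMap.ext
  intro x
  simp [Matrix.vecMulLinear_apply, Matrix.vecMul_vecMul]

lemma sympInner_vecMul (Q : Matrix (Fin (2 * n)) (Fin (2 * n)) K)
    (hQ : Q * sympOmega n K * Qᵀ = sympOmega n K) (x y : Fin (2 * n) → K) :
    sympInner n (x ᵥ* Q) (y ᵥ* Q) = sympInner n x y := by
  have h1 : y ᵥ* Q = Qᵀ *ᵥ y := (Matrix.mulVec_transpose Q y).symm
  rw [sympInner_eq, sympInner_eq, h1, Matrix.mulVec_mulVec, ← Matrix.dotProduct_mulVec,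
    Matrix.mulVec_mulVec, ← Matrix.mul_assoc, hQ]

lemma vml_injective (Q : Matrix (Fin (2 * n)) (Fin (2 * n)) K) (hQu : IsUnit Q) :
    Function.Injective (Matrix.vecMulLinear Q) := by
  have hd : IsUnit Q.det := (Matrix.isUnit_iff_isUnit_det _).mp hQu
  intro x y h
  simp only [Matrix.vecMulLinear_apply] at h
  have := congrArg (fun v => v ᵥ* Q⁻¹) h
  simpa [Matrix.vecMul_vecMul, Matrix.mul_nonsing_inv _ hd, Matrix.vecMul_one] using this

lemma sympDual_map (C : Submodule K (Fin (2 * n) → K)) (Q : Matrix (Fin (2 * n)) (Fin (2 * n)) K)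
    (hQu : IsUnit Q) (hQ : Q * sympOmega n K * Qᵀ = sympOmega n K) :
    sympDual n (C.map (Matrix.vecMulLinear Q)) = (sympDual n C).map (Matrix.vecMulLinear Q) := by
  have hd : IsUnit Q.det := (Matrix.isUnit_iff_isUnit_det _).mp hQu
  ext y
  simp only [mem_sympDual, Submodule.mem_map, Matrix.vecMulLinear_apply]
  constructor
  · intro h
    have hyQ : (y ᵥ* Q⁻¹) ᵥ* Q = y := by
      rw [Matrix.vecMul_vecMul, Matrix.nonsing_inv_mul _ hd, Matrix.vecMul_one]
    refine ⟨y ᵥ* Q⁻¹, ?_, hyQ⟩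
    intro x hx
    rw [← sympInner_vecMul Q hQ x (y ᵥ* Q⁻¹), hyQ]
    exact h (x ᵥ* Q) ⟨x, hx, rfl⟩
  · rintro ⟨z, hz, rfl⟩
    rintro x' ⟨x, hx, rfl⟩
    rw [sympInner_vecMul Q hQ]
    exact hz x hx

lemma symp_mul {A B : Matrix (Fin (2 * n)) (Fin (2 * n)) K}
    (hA : A * sympOmega n K * Aᵀ = sympOmega n K) (hB : B * sympOmega n K * Bᵀ = sympOmega n K) :
    (A * B) * sympOmega n K * (A * B)ᵀ = sympOmega n K := by
  rw [Matrix.transpose_mul]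
  calc A * B * sympOmega n K * (Bᵀ * Aᵀ) = A * (B * sympOmega n K * Bᵀ) * Aᵀ := by
        simp only [Matrix.mul_assoc]
    _ = A * sympOmega n K * Aᵀ := by rw [hB]
    _ = sympOmega n K := hA

lemma symp_inv {Q : Matrix (Fin (2 * n)) (Fin (2 * n)) K} (hQu : IsUnit Q)
    (hQ : Q * sympOmega n K * Qᵀ = sympOmega n K) :
    Q⁻¹ * sympOmega n K * (Q⁻¹)ᵀ = sympOmega n K := by
  have hd : IsUnit Q.det := (Matrix.isUnit_iff_isUnit_det _).mp hQu
  have hdT : IsUnit Qᵀ.det := by rwa [Matrix.det_transpose]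
  rw [Matrix.transpose_nonsing_inv]
  calc Q⁻¹ * sympOmega n K * (Qᵀ)⁻¹ = Q⁻¹ * (Q * sympOmega n K * Qᵀ) * (Qᵀ)⁻¹ := by rw [hQ]
    _ = (Q⁻¹ * Q) * sympOmega n K * (Qᵀ * (Qᵀ)⁻¹) := by simp only [Matrix.mul_assoc]
    _ = sympOmega n K := by
        rw [Matrix.nonsing_inv_mul _ hd, Matrix.mul_nonsing_inv _ hdT, Matrix.one_mul,
          Matrix.mul_one]



end SympAux

open SympAux in
theorem symplecticLCD_symplectic_orbit
    (q : ℕ) (hq : IsPrimePow q)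
    {K : Type*} [Field K] [Fintype K] (hK : Fintype.card K = q)
    (n k : ℕ)
    (C₁ C₂ : Submodule K (Fin (2 * n) → K))
    (hC₁ : Module.finrank K C₁ = 2 * k) (hC₂ : Module.finrank K C₂ = 2 * k)
    (hL₁ : C₁ ⊓ sympDual n C₁ = ⊥) (hL₂ : C₂ ⊓ sympDual n C₂ = ⊥) :
    (∃ Q : Matrix (Fin (2 * n)) (Fin (2 * n)) K,
        IsUnit Q ∧ Q * sympOmega n K * Qᵀ = sympOmega n K ∧
        C₂ = C₁.map (Matrix.vecMulLinear Q)) ∧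
    ∀ C : Submodule K (Fin (2 * n) → K), Module.finrank K C = 2 * k →
      C ⊓ sympDual n C = ⊥ →
      ∀ Q : Matrix (Fin (2 * n)) (Fin (2 * n)) K,
        IsUnit Q → Q * sympOmega n K * Qᵀ = sympOmega n K →
        Module.finrank K (C.map (Matrix.vecMulLinear Q)) = 2 * k ∧
          C.map (Matrix.vecMulLinear Q) ⊓ sympDual n (C.map (Matrix.vecMulLinear Q)) = ⊥ := by
  
  constructor
  · obtain ⟨P₁, h1s, h1u, h1m⟩ := exists_symp_matrix_to_std k C₁ hC₁ hL₁
    obtain ⟨P₂, h2s, h2u, h2m⟩ := exists_symp_matrix_to_std k C₂ hC₂ hL₂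
    have h1d : IsUnit P₁.det := (Matrix.isUnit_iff_isUnit_det _).mp h1u
    have hinv : IsUnit P₁⁻¹ :=
      (Matrix.isUnit_iff_isUnit_det _).mpr (Matrix.isUnit_nonsing_inv_det _ h1d)
    refine ⟨P₁⁻¹ * P₂, hinv.mul h2u, symp_mul (symp_inv h1u h1s) h2s, ?_⟩
    rw [← h1m, ← h2m, ← Submodule.map_comp, ← vml_mul, ← Matrix.mul_assoc,
      Matrix.mul_nonsing_inv _ h1d, Matrix.one_mul]
  · intro C hCr hLC Q hQu hQs
    have hinj := vml_injective Q hQu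
    constructor
    · rw [← LinearEquiv.finrank_eq (Submodule.equivMapOfInjective _ hinj C)]
      exact hCr
    · rw [sympDual_map C Q hQu hQs, ← Submodule.map_inf _ hinj, hLC, Submodule.map_bot]
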